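/- Every finite group G with a normal p-subgroup N such that G/N is abelian of exponent dividing p−1 is supersolvable. -/

import Mathlib

/-- A group is supersolvable if it has a normal series `1 = H 0 ≤ ⋯ ≤ H n = G`
with each term normal in `G` and each successive quotient cyclic (equivalently,
generated over the previous term by a single element). -/
def IsSupersolvable (G : Type*) [Group G] : Prop :=
  ∃ (n : ℕ) (c : Fin (n + 1) → Subgroup G),
    c 0 = ⊥ ∧ c (Fin.last n) = ⊤ ∧ (∀ i, (c i).Normal) ∧
    ∀ i : Fin n, ∃ x : G, c i.succ = c i.castSucc ⊔ Subgroup.closure {x}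

open Polynomial Subgroup

open scoped commutatorElement

section AuxLemmas

private lemma myProd_X_sub_C (p : ℕ) [Fact p.Prime] :
    ∏ a ∈ Finset.univ.erase (0 : ZMod p), (X - C a) = X ^ (p - 1) - 1 := by
  have hp := (Fact.out : p.Prime)
  have hcard : (Finset.univ.erase (0 : ZMod p)).card = p - 1 := by
    rw [Finset.card_erase_of_mem (Finset.mem_univ _), Finset.card_univ, ZMod.card]
  have hmonic : (∏ a ∈ Finset.univ.erase (0 : ZMod p), (X - C a)).Monic :=
    monic_prod_of_monic _ _ fun a _ => monic_X_sub_C a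
  have hdeg : (∏ a ∈ Finset.univ.erase (0 : ZMod p), (X - C a)).natDegree = p - 1 := by
    rw [natDegree_prod_of_monic _ _ fun a _ => monic_X_sub_C a]
    simp [natDegree_X_sub_C, hcard]
  have hg : (X ^ (p - 1) - 1 : (ZMod p)[X]) = X ^ (p - 1) - C 1 := by rw [C_1]
  have h2 := hp.two_le
  have hpos : 0 < p - 1 := by omega
  have hdegg : (X ^ (p - 1) - 1 : (ZMod p)[X]).degree = (p - 1 : ℕ) := by
    rw [hg]; exact degree_X_pow_sub_C hpos 1
  apply Polynomial.eq_of_degree_le_of_eval_finset_eq (Finset.univ.erase (0 : ZMod p))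
  · rw [degree_eq_natDegree hmonic.ne_zero, hdeg, hcard]
  · rw [degree_eq_natDegree hmonic.ne_zero, hdeg, hdegg]
  · rw [hmonic.leadingCoeff]
    rw [hg]
    exact (monic_X_pow_sub_C 1 (by omega)).symm
  · intro x hx
    rw [eval_prod, Finset.prod_eq_zero hx (by simp), eval_sub, eval_pow, eval_X, eval_one,
      ZMod.pow_card_sub_one_eq_one (Finset.ne_of_mem_erase hx), sub_self]

private lemma myEigenvec {p : ℕ} (hp : p.Prime) {M : Type*} [AddCommGroup M] [Module (ZMod p) M]
    (T : M →ₗ[ZMod p] M) (hT : T ^ (p - 1) = 1) (v : M) (hv : v ≠ 0) :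
    ∃ (a : ZMod p) (w : M), w ≠ 0 ∧ T w = a • w := by
  haveI : Fact p.Prime := ⟨hp⟩
  have key : ∀ s : Finset (ZMod p), ∀ u : M, u ≠ 0 →
      (Polynomial.aeval T (∏ a ∈ s, (X - C a))) u = 0 →
      ∃ (a : ZMod p) (w : M), w ≠ 0 ∧ T w = a • w := by
    intro s
    induction s using Finset.induction_on with
    | empty => intro u hu h; simp at h; exact absurd h hu
    | insert _ _ ha ih =>
      rename_i a s
      intro u hu h
      rw [Finset.prod_insert ha, map_mul, Module.End.mul_apply] at h
      set u' := (Polynomial.aeval T (∏ a ∈ s, (X - C a))) u with hu'def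
      by_cases hu' : u' = 0
      · exact ih u hu hu'
      · refine ⟨a, u', hu', ?_⟩
        rw [map_sub, aeval_X, aeval_C, LinearMap.sub_apply,
          Module.algebraMap_end_apply] at h
        rwa [sub_eq_zero] at h
  apply key (Finset.univ.erase 0) v hv
  rw [myProd_X_sub_C p, map_sub, map_one, map_pow, aeval_X, hT, sub_self, LinearMap.zero_apply]

private lemma myEigenvec2 {p : ℕ} (hp : p.Prime) {M : Type*} [AddCommGroup M]
    [Module (ZMod p) M] (f : M →+ M) (hf : (⇑f)^[p - 1] = id) (v : M) (hv : v ≠ 0) :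
    ∃ (a : ZMod p) (w : M), w ≠ 0 ∧ f w = a • w := by
  set T : Module.End (ZMod p) M := f.toZModLinearMap p with hTdef
  have happ : ∀ (n : ℕ) (x : M), (T ^ n) x = (⇑f)^[n] x := by
    intro n
    induction n with
    | zero => intro x; simp
    | succ n ihn =>
      intro x
      rw [pow_succ, Module.End.mul_apply, Function.iterate_succ_apply, ihn]
      rfl
  have hT : T ^ (p - 1) = 1 := LinearMap.ext fun x => by
    rw [happ, hf]; rfl
  obtain ⟨a, w, h1, h2⟩ := myEigenvec hp T hT v hv
  exact ⟨a, w, h1, h2⟩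

private lemma myMulEigen {p : ℕ} (hp : p.Prime) {H : Type*} [CommGroup H]
    (hexp : ∀ x : H, x ^ p = 1) (φ : H →* H) (hφ : (⇑φ)^[p - 1] = id)
    (v : H) (hv : v ≠ 1) :
    ∃ (a : ℕ) (w : H), w ≠ 1 ∧ φ w = w ^ a := by
  letI : Module (ZMod p) (Additive H) :=
    AddCommGroup.zmodModule (fun x => by
      have := hexp x.toMul
      apply Additive.toMul.injective
      simpa [toMul_nsmul] using this)
  have hf : (⇑(MonoidHom.toAdditive φ))^[p - 1] = id := by
    have : ⇑(MonoidHom.toAdditive φ) = ⇑φ := rfl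
    exact hφ
  obtain ⟨a, w, hw0, hfw⟩ := myEigenvec2 hp (MonoidHom.toAdditive φ) hf (Additive.ofMul v)
    (fun h => hv (Additive.ofMul.injective h))
  haveI : NeZero p := ⟨hp.ne_zero⟩
  have hacast : ((a.val : ℕ) : ZMod p) = a := ZMod.natCast_rightInverse a
  refine ⟨a.val, w.toMul, fun h => hw0 (Additive.toMul.injective h), ?_⟩
  · rw [← hacast, Nat.cast_smul_eq_nsmul] at hfw
    have h2 : Additive.ofMul (φ w.toMul) = Additive.ofMul (w.toMul ^ a.val) := by
      calc Additive.ofMul (φ w.toMul) = MonoidHom.toAdditive φ w := rfl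
        _ = a.val • w := hfw
        _ = Additive.ofMul (w.toMul ^ a.val) := by
            apply Additive.toMul.injective
            simp [toMul_nsmul]
    exact Additive.ofMul.injective h2

private lemma myConjPow {G : Type*} [Group G] (h x : G) (n : ℕ) :
    (h * x * h⁻¹) ^ n = h * x ^ n * h⁻¹ := by
  simpa using (map_pow (MulAut.conj h) x n).symm

private lemma mySemiInvariant {G : Type*} [Group G] [Finite G] {p : ℕ} (hp : p.Prime)
    {N : Subgroup G}
    (hcomm : ∀ x y : G, ⁅x, y⁆ ∈ N) (hexp : ∀ x : G, x ^ (p - 1) ∈ N) :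
    ∀ (n : ℕ) (W : Subgroup G), Nat.card W ≤ n → W ≠ ⊥ → W ≤ N →
      (∀ w ∈ W, w ^ p = 1) → (∀ w ∈ W, ∀ x ∈ N, w * x = x * w) →
      (∀ (g : G), ∀ w ∈ W, g * w * g⁻¹ ∈ W) →
      ∃ z : G, z ≠ 1 ∧ z ∈ W ∧ ∀ g : G, ∃ a : ℕ, g * z * g⁻¹ = z ^ a := by
  intro n
  induction n with
  | zero =>
    intro W hcard _ _ _ _ _
    have := Nat.card_pos (α := W)
    omega
  | succ n ih =>
    intro W hcard hWbot hWN hWexp hWcent hWconj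
    by_cases hquick : ∃ z : G, z ≠ 1 ∧ z ∈ W ∧ ∀ g : G, ∃ a : ℕ, g * z * g⁻¹ = z ^ a
    · exact hquick
    push_neg at hquick
    obtain ⟨z₀, hz₀W, hz₀ne⟩ := (nontrivial_iff_exists_ne_one W).mp
      ((nontrivial_iff_ne_bot W).mpr hWbot)
    obtain ⟨g, hg⟩ := hquick z₀ hz₀ne hz₀W
    have hWcomm : ∀ a b : G, a ∈ W → b ∈ W → a * b = b * a :=
      fun a b ha hb => hWcent a ha b (hWN hb)
    letI : CommGroup W :=
      { (inferInstance : Group W) with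
        mul_comm := fun a b => Subtype.ext (hWcomm a b a.2 b.2) }
    set φ : W →* W :=
      { toFun := fun w => ⟨g * w * g⁻¹, hWconj g w w.2⟩
        map_one' := by ext; simp
        map_mul' := by intro a b; ext; push_cast; group } with hφdef
    have hφcoe : ∀ x : W, (φ x : G) = g * x * g⁻¹ := fun x => rfl
    have hφit : ∀ (m : ℕ) (x : W), (((⇑φ)^[m] x : W) : G) = g ^ m * x * (g ^ m)⁻¹ := by
      intro m
      induction m with
      | zero => intro x; simp
      | succ m ihm =>
        intro x
        rw [Function.iterate_succ_apply', hφcoe, ihm x, pow_succ']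
        group
    have hφ : (⇑φ)^[p - 1] = id := by
      funext x
      apply Subtype.ext
      rw [hφit]
      have hc := hWcent x x.2 (g ^ (p - 1)) (hexp g)
      show g ^ (p - 1) * (x : G) * (g ^ (p - 1))⁻¹ = (x : G)
      rw [← hc]
      group
    have hexpW : ∀ x : W, x ^ p = 1 := fun x => Subtype.ext (by
      push_cast
      exact hWexp x x.2)
    obtain ⟨a, w, hwne, hφw⟩ := myMulEigen hp hexpW φ hφ ⟨z₀, hz₀W⟩
      (fun h => hz₀ne (congrArg Subtype.val h))
    have heig : g * (w : G) * g⁻¹ = (w : G) ^ a := by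
      have h3 := congrArg Subtype.val hφw
      push_cast at h3
      exact h3
    have hwne' : (w : G) ≠ 1 := fun h => hwne (Subtype.ext h)
    set W' : Subgroup G :=
      { carrier := {x : G | x ∈ W ∧ g * x * g⁻¹ = x ^ a}
        one_mem' := ⟨W.one_mem, by simp⟩
        mul_mem' := by
          rintro x y ⟨hxW, hx⟩ ⟨hyW, hy⟩
          refine ⟨W.mul_mem hxW hyW, ?_⟩
          have hcxy : Commute x y := hWcomm x y hxW hyW
          rw [hcxy.mul_pow, ← hx, ← hy]
          group
        inv_mem' := by
          rintro x ⟨hxW, hx⟩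
          refine ⟨W.inv_mem hxW, ?_⟩
          rw [inv_pow, ← hx]
          group } with hW'def
    have hW'le : W' ≤ W := fun x hx => hx.1
    have hz₀notW' : z₀ ∉ W' := fun h => hg a h.2
    have hW'ne : W' ≠ W := fun h => hz₀notW' (h ▸ hz₀W)
    have hW'bot : W' ≠ ⊥ := by
      intro h
      rw [Subgroup.eq_bot_iff_forall] at h
      exact hwne' (h w ⟨w.2, heig⟩)
    have hcard' : Nat.card W' ≤ n := by
      have hlt : Nat.card W' < Nat.card W := by
        rcases lt_or_ge (Nat.card W') (Nat.card W) with h | h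
        · exact h
        · exact absurd (Subgroup.eq_of_le_of_card_ge hW'le h) hW'ne
      omega
    have hconjswap : ∀ (h x : G), x ∈ W →
        (h⁻¹ * g * h) * x * (h⁻¹ * g * h)⁻¹ = g * x * g⁻¹ := by
      intro h x hx
      have hcN : g⁻¹ * h⁻¹ * g * h ∈ N := by
        have := hcomm g⁻¹ h⁻¹
        simpa [commutatorElement_def, mul_assoc] using this
      have hxc := hWcent x hx _ hcN
      calc (h⁻¹ * g * h) * x * (h⁻¹ * g * h)⁻¹
          = g * ((g⁻¹ * h⁻¹ * g * h) * x * (g⁻¹ * h⁻¹ * g * h)⁻¹) * g⁻¹ := by group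
        _ = g * (x * (g⁻¹ * h⁻¹ * g * h) * (g⁻¹ * h⁻¹ * g * h)⁻¹) * g⁻¹ := by rw [← hxc]
        _ = g * x * g⁻¹ := by group
    have hW'conj : ∀ (h : G), ∀ x ∈ W', h * x * h⁻¹ ∈ W' := by
      intro h x hx
      refine ⟨hWconj h x hx.1, ?_⟩
      have key := hconjswap h x hx.1
      calc g * (h * x * h⁻¹) * g⁻¹
          = h * ((h⁻¹ * g * h) * x * (h⁻¹ * g * h)⁻¹) * h⁻¹ := by group
        _ = h * (g * x * g⁻¹) * h⁻¹ := by rw [key]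
        _ = h * x ^ a * h⁻¹ := by rw [hx.2]
        _ = (h * x * h⁻¹) ^ a := (myConjPow h x a).symm
    obtain ⟨z, hz1, hzW', hzev⟩ := ih W' hcard' hW'bot (hW'le.trans hWN)
      (fun x hx => hWexp x (hW'le hx)) (fun x hx => hWcent x (hW'le hx)) hW'conj
    exact ⟨z, hz1, hW'le hzW', hzev⟩

private lemma myLift {G Q : Type*} [Group G] [Group Q] (f : G →* Q)
    (hf : Function.Surjective f)
    (z : G) (hker : f.ker = Subgroup.closure {z}) (hQ : IsSupersolvable Q) :
    IsSupersolvable G := by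
  obtain ⟨n, c, h0, hlast, hnorm, hstep⟩ := hQ
  have hcomap_sup : ∀ (A : Subgroup Q) (x : G),
      Subgroup.comap f (A ⊔ Subgroup.closure {f x}) =
        Subgroup.comap f A ⊔ Subgroup.closure {x} := by
    intro A x
    have h1 : Subgroup.map f (Subgroup.comap f A ⊔ Subgroup.closure {x})
        = A ⊔ Subgroup.closure {f x} := by
      rw [Subgroup.map_sup, Subgroup.map_comap_eq_self_of_surjective hf,
        MonoidHom.map_closure, Set.image_singleton]
    have hker' : f.ker ≤ Subgroup.comap f A := by
      rw [← MonoidHom.comap_bot f]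
      exact Subgroup.comap_mono bot_le
    rw [← h1, Subgroup.comap_map_eq, sup_eq_left.mpr (le_sup_of_le_left hker')]
  refine ⟨n + 1, Fin.cons ⊥ (fun i => Subgroup.comap f (c i)), Fin.cons_zero _ _, ?_, ?_, ?_⟩
  · rw [← Fin.succ_last, Fin.cons_succ, hlast, Subgroup.comap_top]
  · intro i
    refine Fin.cases ?_ ?_ i
    · exact inferInstanceAs ((⊥ : Subgroup G).Normal)
    · intro j
      rw [Fin.cons_succ]
      exact (hnorm j).comap f
  · intro i
    refine Fin.cases ?_ ?_ i
    · refine ⟨z, ?_⟩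
      have h1 : (Fin.succ 0 : Fin (n + 2)) = Fin.succ 0 := rfl
      rw [Fin.cons_succ, h0, MonoidHom.comap_bot, hker, Fin.castSucc_zero,
        Fin.cons_zero, bot_sup_eq]
    · intro j
      obtain ⟨y, hy⟩ := hstep j
      obtain ⟨x, rfl⟩ := hf y
      refine ⟨x, ?_⟩
      rw [Fin.cons_succ, hy, hcomap_sup, ← Fin.succ_castSucc, Fin.cons_succ]

private lemma myPowP {G : Type*} [Group G] (p : ℕ) :
    ∀ (k : ℕ) (u : G), u ≠ 1 → u ^ p ^ k = 1 → ∃ m : ℕ, u ^ m ≠ 1 ∧ (u ^ m) ^ p = 1 := by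
  intro k
  induction k with
  | zero => intro u hu h; rw [pow_zero, pow_one] at h; exact absurd h hu
  | succ k ih =>
    intro u hu h
    by_cases h' : u ^ p ^ k = 1
    · exact ih u hu h'
    · exact ⟨p ^ k, h', by rw [← pow_mul, ← pow_succ]; exact h⟩

universe u

private lemma myMain : ∀ (n : ℕ) (G : Type u) (_ : Group G) (_ : Finite G), Nat.card G ≤ n →
    ∀ (p : ℕ), p.Prime → ∀ (N : Subgroup G), N.Normal → IsPGroup p N →
    (∀ x y : G, ⁅x, y⁆ ∈ N) → (∀ x : G, x ^ (p - 1) ∈ N) → IsSupersolvable G := by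
  intro n
  induction n with
  | zero =>
    intro G _ _ hcard p hp N hN hNp hcomm hexp
    have := Nat.card_pos (α := G)
    omega
  | succ n ih =>
    intro G _ _ hcard p hp N hN hNp hcomm hexp
    rcases subsingleton_or_nontrivial G with hG | hG
    · refine ⟨0, fun _ => ⊥, rfl, ?_, fun _ => inferInstanceAs ((⊥ : Subgroup G).Normal),
        fun i => i.elim0⟩
      rw [eq_top_iff]
      intro x _
      rw [Subgroup.mem_bot]
      exact Subsingleton.elim x 1
    · have hz : ∃ z : G, z ≠ 1 ∧ ∀ g : G, ∃ a : ℕ, g * z * g⁻¹ = z ^ a := by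
        by_cases hNbot : N = ⊥
        · obtain ⟨z, hzne⟩ := exists_ne (1 : G)
          refine ⟨z, hzne, fun g => ⟨1, ?_⟩⟩
          have hco := hcomm g z
          rw [hNbot, Subgroup.mem_bot, commutatorElement_def] at hco
          rw [pow_one]
          calc g * z * g⁻¹ = (g * z * g⁻¹ * z⁻¹) * z := by group
            _ = z := by rw [hco, one_mul]
        · set W₀ : Subgroup G :=
            { carrier := {x : G | x ∈ N ∧ x ^ p = 1 ∧ ∀ y ∈ N, x * y = y * x}
              one_mem' := ⟨N.one_mem, one_pow p, fun y _ => by rw [one_mul, mul_one]⟩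
              mul_mem' := by
                rintro a b ⟨haN, hap, hac⟩ ⟨hbN, hbp, hbc⟩
                refine ⟨N.mul_mem haN hbN, ?_, fun y hy => ?_⟩
                · have hcab : Commute a b := hac b hbN
                  rw [hcab.mul_pow, hap, hbp, one_mul]
                · calc a * b * y = a * (y * b) := by rw [mul_assoc, hbc y hy]
                    _ = y * (a * b) := by rw [← mul_assoc, hac y hy, mul_assoc]
              inv_mem' := by
                rintro a ⟨haN, hap, hac⟩
                refine ⟨N.inv_mem haN, by rw [inv_pow, hap, inv_one], fun y hy => ?_⟩
                calc a⁻¹ * y = a⁻¹ * y * a * a⁻¹ := by group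
                  _ = a⁻¹ * (a * y) * a⁻¹ := by rw [mul_assoc a⁻¹ y a, ← hac y hy]
                  _ = y * a⁻¹ := by group } with hW₀def
          have hW₀mem : ∀ x : G,
              x ∈ W₀ ↔ x ∈ N ∧ x ^ p = 1 ∧ ∀ y ∈ N, x * y = y * x := fun x => Iff.rfl
          -- W₀ is nontrivial
          haveI : Nontrivial N := (nontrivial_iff_ne_bot N).mpr hNbot
          haveI : Fact p.Prime := ⟨hp⟩
          haveI := hNp.center_nontrivial
          obtain ⟨c, hc⟩ := exists_ne (1 : Subgroup.center N)
          set u : G := ((c : N) : G) with hudef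
          have hu1 : u ≠ 1 := fun h => hc (Subtype.ext (Subtype.ext h))
          have huN : u ∈ N := (c : N).2
          have hucent : ∀ y ∈ N, u * y = y * u := by
            intro y hy
            have := (Subgroup.mem_center_iff.mp c.2) ⟨y, hy⟩
            have h2 := congrArg Subtype.val this
            push_cast at h2
            exact h2.symm
          obtain ⟨k, hk⟩ := hNp (c : N)
          have hupow : u ^ p ^ k = 1 := by
            have := congrArg (Subtype.val) hk
            push_cast at this
            exact this
          obtain ⟨m, hm1, hmp⟩ := myPowP p k u hu1 hupow
          have hxW₀ : u ^ m ∈ W₀ := by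
            refine ⟨N.pow_mem huN m, hmp, fun y hy => ?_⟩
            exact (Commute.pow_left (hucent y hy) m)
          have hW₀bot : W₀ ≠ ⊥ := by
            intro h
            rw [h, Subgroup.mem_bot] at hxW₀
            exact hm1 hxW₀
          have hW₀conj : ∀ (g : G), ∀ w ∈ W₀, g * w * g⁻¹ ∈ W₀ := by
            intro g w hw
            refine ⟨hN.conj_mem w hw.1 g, ?_, fun y hy => ?_⟩
            · rw [myConjPow, hw.2.1, mul_one, mul_inv_cancel]
            · have hy' : g⁻¹ * y * g ∈ N := by
                have := hN.conj_mem y hy g⁻¹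
                simpa using this
              have hcw := hw.2.2 (g⁻¹ * y * g) hy'
              calc (g * w * g⁻¹) * y = g * (w * (g⁻¹ * y * g)) * g⁻¹ := by group
                _ = g * ((g⁻¹ * y * g) * w) * g⁻¹ := by rw [hcw]
                _ = y * (g * w * g⁻¹) := by group
          obtain ⟨z, hzne, hzW₀, hzconj⟩ := mySemiInvariant hp hcomm hexp (Nat.card W₀) W₀
            le_rfl hW₀bot (fun x hx => hx.1) (fun w hw => hw.2.1) (fun w hw => hw.2.2) hW₀conj
          exact ⟨z, hzne, hzconj⟩
      obtain ⟨z, hzne, hzconj⟩ := hz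
      set K : Subgroup G := Subgroup.closure {z} with hKdef
      haveI hKnormal : K.Normal := by
        constructor
        intro x hx g
        rw [hKdef, Subgroup.mem_closure_singleton] at hx ⊢
        obtain ⟨m, rfl⟩ := hx
        obtain ⟨a, ha⟩ := hzconj g
        refine ⟨(a : ℤ) * m, ?_⟩
        calc z ^ ((a : ℤ) * m) = (z ^ (a : ℤ)) ^ m := by rw [zpow_mul]
          _ = ((z : G) ^ (a : ℕ)) ^ m := by rw [zpow_natCast]
          _ = (g * z * g⁻¹) ^ m := by rw [← ha]
          _ = g * z ^ m * g⁻¹ := by simpa using (map_zpow (MulAut.conj g) z m)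
      set f := QuotientGroup.mk' K with hfdef
      have hfs : Function.Surjective f := QuotientGroup.mk'_surjective K
      haveI : Finite (G ⧸ K) := Finite.of_surjective f hfs
      have hzK : z ∈ K := Subgroup.mem_closure_singleton_self z
      have hcardlt : Nat.card (G ⧸ K) < Nat.card G := by
        have h1 := Subgroup.card_eq_card_quotient_mul_card_subgroup K
        have hK1 : Nat.card K ≠ 1 := by
          intro h
          have := Subgroup.eq_bot_of_card_le K (le_of_eq h)
          rw [this, Subgroup.mem_bot] at hzK
          exact hzne hzK
        have hKpos := Nat.card_pos (α := K)
        have hQpos := Nat.card_pos (α := G ⧸ K)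
        have h2 : Nat.card (G ⧸ K) * 2 ≤ Nat.card (G ⧸ K) * Nat.card K :=
          Nat.mul_le_mul_left _ (by omega)
        omega
      apply myLift f hfs z (by rw [QuotientGroup.ker_mk'])
      apply ih (G ⧸ K) inferInstance inferInstance (by omega) p hp (N.map f)
        (hN.map f hfs) (hNp.map f)
      · intro x y
        obtain ⟨a, rfl⟩ := hfs x
        obtain ⟨b, rfl⟩ := hfs y
        exact Subgroup.mem_map.mpr ⟨⁅a, b⁆, hcomm a b, map_commutatorElement f a b⟩
      · intro x
        obtain ⟨a, rfl⟩ := hfs x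
        exact Subgroup.mem_map.mpr ⟨a ^ (p - 1), hexp a, map_pow f a (p - 1)⟩

end AuxLemmas

/-- Every finite group with a normal `p`-subgroup `N` (for a prime `p`) such that
`G/N` is abelian of exponent dividing `p-1` (expressed by: all commutators and
all `(p-1)`-st powers lie in `N`) is supersolvable. -/


theorem isSupersolvable_of_normal_pSubgroup {G : Type*} [Group G] [Finite G]
    (p : ℕ) (hp : p.Prime) (N : Subgroup G) (hN : N.Normal) (hNp : IsPGroup p N)
    (hcomm : ∀ x y : G, ⁅x, y⁆ ∈ N) (hexp : ∀ x : G, x ^ (p - 1) ∈ N) :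
    IsSupersolvable G := by
  exact myMain (Nat.card G) G ‹_› ‹_› le_rfl p hp N hN hNp hcomm hexp
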